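/- arXiv:1605.01997 — 4 statements merged into one kernel-verified Lean document; each statement's English description precedes it below -/
import Mathlib

section
/- Bernstein-type binomial tail bound: for an integer q ≥ 1, x, y ∈ (0,1) with x ≤ y, the probability P(Bin(q,x) ≥ qy) = Σ_{j=⌈qy⌉}^{q} C(q,j)·x^j·(1-x)^{q-j} is at most exp(-q·d(y,x)), where d(y,x) = (1/2)(y-x)²/(x(1-x)+(1-2x)(y-x)/3). -/
/-- The Bernstein-type rate function `d(y,x)`. -/
noncomputable def dLow (y x : ℝ) : ℝ :=
  (1 / 2) * (y - x) ^ 2 / (x * (1 - x) + (1 - 2 * x) * (y - x) / 3)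

open Real


noncomputable def Faux (x s : ℝ) : ℝ :=
  s*(log s - log x) + (1-s)*(log (1-s) - log (1-x))
    - (1/2)*(s-x)^2/(x*(1-x) + (1-2*x)*(s-x)/3)

noncomputable def Gaux (x s : ℝ) : ℝ :=
  (log s - log x) - (log (1-s) - log (1-x))
    - (s-x)*(6*(x*(1-x))+(1-2*x)*(s-x))/(6*(x*(1-x) + (1-2*x)*(s-x)/3)^2)

lemma D_pos (x t : ℝ) (hx0 : 0 < x) (hx1 : x < 1) (hxt : x ≤ t) (ht1 : t < 1) :
    0 < x*(1-x) + (1-2*x)*(t-x)/3 := by nlinarith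

lemma hasDerivAt_Faux (x t : ℝ) (hx0 : 0 < x) (hx1 : x < 1) (hxt : x ≤ t) (ht1 : t < 1) :
    HasDerivAt (Faux x) (Gaux x t) t := by
  have ht0 : 0 < t := lt_of_lt_of_le hx0 hxt
  have ht1' : (0:ℝ) < 1 - t := by linarith
  have hD := D_pos x t hx0 hx1 hxt ht1
  have h1 : HasDerivAt (fun s : ℝ => s*(log s - log x))
      (1 * (log t - log x) + t * t⁻¹) t :=
    (hasDerivAt_id t).mul ((Real.hasDerivAt_log ht0.ne').sub_const (log x))
  have hin : HasDerivAt (fun s : ℝ => 1 - s) (0 - 1) t :=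
    (hasDerivAt_const t 1).sub (hasDerivAt_id t)
  have hlog1t : HasDerivAt (fun s : ℝ => log (1-s)) ((1-t)⁻¹ * (0-1)) t :=
    (Real.hasDerivAt_log ht1'.ne').comp t hin
  have h2 : HasDerivAt (fun s : ℝ => (1-s)*(log (1-s) - log (1-x)))
      ((0-1) * (log (1-t) - log (1-x)) + (1-t) * ((1-t)⁻¹ * (0-1))) t :=
    hin.mul (hlog1t.sub_const (log (1-x)))
  have hN : HasDerivAt (fun s : ℝ => (1/2)*(s-x)^2)
      ((1/2) * (2 * (t-x)^1 * 1)) t :=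
    (((hasDerivAt_id t).sub_const x).pow 2).const_mul (1/2)
  have hM : HasDerivAt (fun s : ℝ => x*(1-x) + (1-2*x)*(s-x)/3) ((1-2*x) * 1 / 3) t :=
    ((((hasDerivAt_id t).sub_const x).const_mul (1-2*x)).div_const 3).const_add (x*(1-x))
  have h3 := hN.div hM hD.ne'
  have h := (h1.add h2).sub h3
  convert h using 1
  · rfl
  · rfl
  · rfl
  unfold Gaux
  have e3 : (t-x)*(6*(x*(1-x))+(1-2*x)*(t-x))/(6*(x*(1-x) + (1-2*x)*(t-x)/3)^2)
      = ((1/2) * (2 * (t-x)^1 * 1) * (x*(1-x) + (1-2*x)*(t-x)/3)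
          - (1/2)*(t-x)^2 * ((1-2*x) * 1 / 3)) / (x*(1-x) + (1-2*x)*(t-x)/3)^2 := by
    rw [div_eq_div_iff (by positivity) (by positivity)]
    ring
  rw [e3, mul_inv_cancel₀ ht0.ne']
  have e2 : (1-t) * ((1-t)⁻¹ * (0-1)) = -1 := by
    field_simp
    ring
  rw [e2]
  ring

lemma hasDerivAt_Gaux (x t : ℝ) (hx0 : 0 < x) (hx1 : x < 1) (hxt : x ≤ t) (ht1 : t < 1) :
    HasDerivAt (Gaux x)
      (1/t + 1/(1-t) - (x*(1-x))^2/(x*(1-x) + (1-2*x)*(t-x)/3)^3) t := by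
  have ht0 : 0 < t := lt_of_lt_of_le hx0 hxt
  have ht1' : (0:ℝ) < 1 - t := by linarith
  have hD := D_pos x t hx0 hx1 hxt ht1
  have h1 : HasDerivAt (fun s : ℝ => log s - log x) t⁻¹ t :=
    (Real.hasDerivAt_log ht0.ne').sub_const (log x)
  have hin : HasDerivAt (fun s : ℝ => 1 - s) (0 - 1) t :=
    (hasDerivAt_const t 1).sub (hasDerivAt_id t)
  have h2 : HasDerivAt (fun s : ℝ => log (1-s) - log (1-x)) ((1-t)⁻¹ * (0-1)) t :=
    ((Real.hasDerivAt_log ht1'.ne').comp t hin).sub_const (log (1-x))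
  have hN : HasDerivAt (fun s : ℝ => (s-x)*(6*(x*(1-x))+(1-2*x)*(s-x)))
      (1 * (6*(x*(1-x))+(1-2*x)*(t-x)) + (t-x) * ((1-2*x) * 1)) t :=
    ((hasDerivAt_id t).sub_const x).mul
      ((((hasDerivAt_id t).sub_const x).const_mul (1-2*x)).const_add (6*(x*(1-x))))
  have hMin : HasDerivAt (fun s : ℝ => x*(1-x) + (1-2*x)*(s-x)/3) ((1-2*x) * 1 / 3) t :=
    ((((hasDerivAt_id t).sub_const x).const_mul (1-2*x)).div_const 3).const_add (x*(1-x))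
  have hM : HasDerivAt (fun s : ℝ => 6*(x*(1-x) + (1-2*x)*(s-x)/3)^2)
      (6 * (2 * (x*(1-x) + (1-2*x)*(t-x)/3)^1 * ((1-2*x) * 1 / 3))) t :=
    (hMin.pow 2).const_mul 6
  have hM0 : 6*(x*(1-x) + (1-2*x)*(t-x)/3)^2 ≠ 0 := by positivity
  have h3 := hN.div hM hM0
  have h := (h1.sub h2).sub h3
  convert h using 1
  · rfl
  · rfl
  · rfl
  have e1 : (1:ℝ)/t = t⁻¹ := one_div t
  have e2 : (1:ℝ)/(1-t) = -((1-t)⁻¹ * (0-1)) := by field_simp; ring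
  have e3 : (x*(1-x))^2/(x*(1-x) + (1-2*x)*(t-x)/3)^3
      = (1 * (6*(x*(1-x))+(1-2*x)*(t-x)) + (t-x) * ((1-2*x) * 1))
          * (6*(x*(1-x) + (1-2*x)*(t-x)/3)^2)
        / (6*(x*(1-x) + (1-2*x)*(t-x)/3)^2)^2
        - (t-x)*(6*(x*(1-x))+(1-2*x)*(t-x))
          * (6 * (2 * (x*(1-x) + (1-2*x)*(t-x)/3)^1 * ((1-2*x) * 1 / 3)))
          / (6*(x*(1-x) + (1-2*x)*(t-x)/3)^2)^2 := by
    rw [div_sub_div_same, div_eq_div_iff (by positivity) (by positivity)]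
    ring
  rw [e1, e2, e3]
  ring


lemma bracket_nonneg (x t : ℝ) (hx0 : 0 < x) (hx1 : x < 1) (hxt : x ≤ t) (ht1 : t < 1) :
    0 ≤ (x*(1-x))^2 + (x*(1-x))*(1-2*x)^2/3 + (1-2*x)^3*(t-x)/27 := by
  have hx1' : (0:ℝ) ≤ 1 - x := by linarith
  have ha : (0:ℝ) ≤ x*(1-x) := mul_nonneg hx0.le hx1'
  rcases le_or_gt 0 (1-2*x) with hb | hb
  · have h1 : 0 ≤ (1-2*x)^3*(t-x) :=
      mul_nonneg (pow_nonneg hb 3) (by linarith)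
    have h2 : 0 ≤ (x*(1-x))*(1-2*x)^2 := mul_nonneg ha (sq_nonneg _)
    nlinarith [sq_nonneg (x*(1-x))]
  · have hu : t - x ≤ 1 - x := by linarith
    have hb3 : (1-2*x)^3 ≤ 0 := by nlinarith [sq_nonneg (1-2*x)]
    have h3 : (1-2*x)^3*(1-x) ≤ (1-2*x)^3*(t-x) := by nlinarith
    have h4 : 0 ≤ (1-x)*((1-2*x)^2*(7*x+1)) :=
      mul_nonneg hx1' (mul_nonneg (sq_nonneg _) (by linarith))
    nlinarith [sq_nonneg (x*(1-x))]

lemma D_pos' (x t : ℝ) (hx0 : 0 < x) (hx1 : x < 1) (hxt : x ≤ t) (ht1 : t < 1) :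
    0 < x*(1-x) + (1-2*x)*(t-x)/3 := by nlinarith

lemma Gderiv_nonneg (x t : ℝ) (hx0 : 0 < x) (hx1 : x < 1) (hxt : x ≤ t) (ht1 : t < 1) :
    0 ≤ 1/t + 1/(1-t) - (x*(1-x))^2/(x*(1-x) + (1-2*x)*(t-x)/3)^3 := by
  have ht0 : 0 < t := lt_of_lt_of_le hx0 hxt
  have ht1' : (0:ℝ) < 1 - t := by linarith
  have hD := D_pos' x t hx0 hx1 hxt ht1
  have key : (x*(1-x) + (1-2*x)*(t-x)/3)^3 - (x*(1-x))^2*(t*(1-t))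
      = (t-x)^2*((x*(1-x))^2 + (x*(1-x))*(1-2*x)^2/3 + (1-2*x)^3*(t-x)/27) := by ring
  have hbr := bracket_nonneg x t hx0 hx1 hxt ht1
  have h5 : (x*(1-x))^2*(t*(1-t)) ≤ (x*(1-x) + (1-2*x)*(t-x)/3)^3 := by
    nlinarith [mul_nonneg (sq_nonneg (t-x)) hbr]
  have h6 : (x*(1-x))^2/(x*(1-x) + (1-2*x)*(t-x)/3)^3 ≤ 1/(t*(1-t)) := by
    rw [div_le_div_iff₀ (by positivity) (by positivity)]
    nlinarith
  have h7 : 1/(t*(1-t)) = 1/t + 1/(1-t) := by field_simp; ring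
  linarith [h7 ▸ h6]

lemma kl_ge_dLow (x y : ℝ) (hx0 : 0 < x) (hx1 : x < 1) (hy1 : y < 1) (hxy : x ≤ y) :
    (1/2)*(y-x)^2/(x*(1-x) + (1-2*x)*(y-x)/3)
      ≤ y*(log y - log x) + (1-y)*(log (1-y) - log (1-x)) := by
  have hGmono : MonotoneOn (Gaux x) (Set.Icc x y) := by
    apply monotoneOn_of_hasDerivWithinAt_nonneg (convex_Icc x y)
      (f' := fun t => 1/t + 1/(1-t) - (x*(1-x))^2/(x*(1-x) + (1-2*x)*(t-x)/3)^3)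
    · intro t ht
      exact (hasDerivAt_Gaux x t hx0 hx1 ht.1
        (lt_of_le_of_lt ht.2 hy1)).continuousAt.continuousWithinAt
    · intro t ht
      rw [interior_Icc] at ht
      exact (hasDerivAt_Gaux x t hx0 hx1 ht.1.le
        (lt_trans ht.2 hy1)).hasDerivWithinAt
    · intro t ht
      rw [interior_Icc] at ht
      exact Gderiv_nonneg x t hx0 hx1 ht.1.le (lt_trans ht.2 hy1)
  have hGx : Gaux x x = 0 := by unfold Gaux; simp
  have hGpos : ∀ t ∈ Set.Icc x y, 0 ≤ Gaux x t := by
    intro t ht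
    have := hGmono (Set.left_mem_Icc.2 hxy) ht ht.1
    rwa [hGx] at this
  have hFmono : MonotoneOn (Faux x) (Set.Icc x y) := by
    apply monotoneOn_of_hasDerivWithinAt_nonneg (convex_Icc x y) (f' := Gaux x)
    · intro t ht
      exact (hasDerivAt_Faux x t hx0 hx1 ht.1
        (lt_of_le_of_lt ht.2 hy1)).continuousAt.continuousWithinAt
    · intro t ht
      rw [interior_Icc] at ht
      exact (hasDerivAt_Faux x t hx0 hx1 ht.1.le
        (lt_trans ht.2 hy1)).hasDerivWithinAt
    · intro t ht
      rw [interior_Icc] at ht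
      exact hGpos t ⟨ht.1.le, ht.2.le⟩
  have hFx : Faux x x = 0 := by unfold Faux; simp
  have h := hFmono (Set.left_mem_Icc.2 hxy) (Set.right_mem_Icc.2 hxy) hxy
  rw [hFx] at h
  unfold Faux at h
  linarith

theorem stmt_8 (q : ℕ) (hq : 1 ≤ q) (x y : ℝ) (hx : x ∈ Set.Ioo (0 : ℝ) 1)
    (hy : y ∈ Set.Ioo (0 : ℝ) 1) (hxy : x ≤ y) :
    ∑ j ∈ Finset.Icc ⌈(q : ℝ) * y⌉₊ q, (q.choose j : ℝ) * x ^ j * (1 - x) ^ (q - j)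
      ≤ Real.exp (-(q : ℝ) * dLow y x) := by
  obtain ⟨hx0, hx1⟩ := hx
  obtain ⟨hy0, hy1⟩ := hy
  have h1x : (0:ℝ) < 1 - x := by linarith
  have h1y : (0:ℝ) < 1 - y := by linarith
  set r : ℝ := y*(1-x)/(x*(1-y)) with hr
  have hrpos : 0 < r := by positivity
  have hr1 : 1 ≤ r := by
    rw [hr, le_div_iff₀ (by positivity)]
    nlinarith
  set L : ℝ := Real.log r with hL
  have hL0 : 0 ≤ L := log_nonneg hr1
  have hexpL : exp L = r := exp_log hrpos
  set m : ℕ := ⌈(q : ℝ) * y⌉₊ with hm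
  -- Step 1
  have step1 : ∑ j ∈ Finset.Icc m q, (q.choose j : ℝ) * x ^ j * (1 - x) ^ (q - j)
      ≤ ∑ j ∈ Finset.range (q+1),
          exp (L * ((j:ℝ) - (q:ℝ)*y)) * ((q.choose j : ℝ) * x ^ j * (1 - x) ^ (q - j)) := by
    calc ∑ j ∈ Finset.Icc m q, (q.choose j : ℝ) * x ^ j * (1 - x) ^ (q - j)
        ≤ ∑ j ∈ Finset.Icc m q,
            exp (L * ((j:ℝ) - (q:ℝ)*y)) * ((q.choose j : ℝ) * x ^ j * (1 - x) ^ (q - j)) := by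
          apply Finset.sum_le_sum
          intro j hj
          rw [Finset.mem_Icc] at hj
          have hjy : (q:ℝ)*y ≤ (j:ℝ) := le_trans (Nat.le_ceil _) (by exact_mod_cast hj.1)
          have hw : 1 ≤ exp (L * ((j:ℝ) - (q:ℝ)*y)) :=
            one_le_exp (mul_nonneg hL0 (by linarith))
          have hterm : 0 ≤ (q.choose j : ℝ) * x ^ j * (1 - x) ^ (q - j) := by positivity
          nlinarith
      _ ≤ ∑ j ∈ Finset.range (q+1),
            exp (L * ((j:ℝ) - (q:ℝ)*y)) * ((q.choose j : ℝ) * x ^ j * (1 - x) ^ (q - j)) := by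
          apply Finset.sum_le_sum_of_subset_of_nonneg
          · intro j hj
            rw [Finset.mem_Icc] at hj
            rw [Finset.mem_range]
            omega
          · intro j _ _
            positivity
  -- Step 2
  have step2 : ∑ j ∈ Finset.range (q+1),
      exp (L * ((j:ℝ) - (q:ℝ)*y)) * ((q.choose j : ℝ) * x ^ j * (1 - x) ^ (q - j))
      = exp (-(L*((q:ℝ)*y))) * (x * exp L + (1-x))^q := by
    rw [add_pow, Finset.mul_sum]
    apply Finset.sum_congr rfl
    intro j hj
    have e1 : exp (L * ((j:ℝ) - (q:ℝ)*y)) = exp L ^ j * exp (-(L*((q:ℝ)*y))) := by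
      rw [← Real.exp_nat_mul, ← Real.exp_add]
      ring_nf
    rw [e1, mul_pow]
    ring
  -- Step 3
  have step3 : x * exp L + (1-x) = (1-x)/(1-y) := by
    rw [hexpL, hr]
    field_simp
    ring
  -- Step 4
  have hlogr : L = log y + log (1-x) - (log x + log (1-y)) := by
    rw [hL, hr, log_div (by positivity) (by positivity),
      log_mul hy0.ne' h1x.ne', log_mul hx0.ne' h1y.ne']
  have step4 : exp (-(L*((q:ℝ)*y))) * ((1-x)/(1-y))^q
      ≤ exp (-(q : ℝ) * dLow y x) := by
    have hc : ((1-x)/(1-y))^q = exp ((q:ℝ) * log ((1-x)/(1-y))) := by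
      rw [Real.exp_nat_mul, exp_log (by positivity)]
    rw [hc, ← Real.exp_add, exp_le_exp]
    rw [log_div h1x.ne' h1y.ne', hlogr]
    have hkl := kl_ge_dLow x y hx0 hx1 hy1 hxy
    have hq0 : (0:ℝ) ≤ (q:ℝ) := Nat.cast_nonneg q
    have hdl : dLow y x = (1/2)*(y-x)^2/(x*(1-x) + (1-2*x)*(y-x)/3) := by
      unfold dLow; ring_nf
    rw [hdl]
    have := mul_le_mul_of_nonneg_left hkl hq0
    nlinarith [this]
  calc ∑ j ∈ Finset.Icc m q, (q.choose j : ℝ) * x ^ j * (1 - x) ^ (q - j)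
      ≤ ∑ j ∈ Finset.range (q+1),
          exp (L * ((j:ℝ) - (q:ℝ)*y)) * ((q.choose j : ℝ) * x ^ j * (1 - x) ^ (q - j)) := step1
    _ = exp (-(L*((q:ℝ)*y))) * (x * exp L + (1-x))^q := step2
    _ = exp (-(L*((q:ℝ)*y))) * ((1-x)/(1-y))^q := by rw [step3]
    _ ≤ exp (-(q : ℝ) * dLow y x) := step4
end

section
/- For x ∈ (0,1), y ∈ (0,1) with x ≤ y, the derivative with respect to x of d(y,x) - D(y‖x) equals (1-x(1-x))·(y-x)³ / (x·(1-x)·(y - x(x+2y-2))²), and in particular this derivative is nonnegative. -/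
/-- Bernoulli Kullback-Leibler divergence `D(y‖x)`. -/
noncomputable def bernKL (y x : ℝ) : ℝ :=
  y * Real.log (y / x) + (1 - y) * Real.log ((1 - y) / (1 - x))

theorem stmt_9 (x y : ℝ) (hx : x ∈ Set.Ioo (0 : ℝ) 1) (hy : y ∈ Set.Ioo (0 : ℝ) 1)
    (hxy : x ≤ y) :
    HasDerivAt (fun t => dLow y t - bernKL y t)
      ((1 - x * (1 - x)) * (y - x) ^ 3 /
        (x * (1 - x) * (y - x * (x + 2 * y - 2)) ^ 2)) x ∧
    0 ≤ (1 - x * (1 - x)) * (y - x) ^ 3 /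
        (x * (1 - x) * (y - x * (x + 2 * y - 2)) ^ 2) := by
  obtain ⟨hx0, hx1⟩ := hx
  obtain ⟨hy0, hy1⟩ := hy
  have hxne : x ≠ 0 := ne_of_gt hx0
  have h1x : (0:ℝ) < 1 - x := by linarith
  have h1xne : (1:ℝ) - x ≠ 0 := ne_of_gt h1x
  have hQ : 0 < y - x * (x + 2 * y - 2) := by
    nlinarith [mul_pos hx0 h1x, mul_nonneg hx0.le (sub_nonneg.2 hy1.le)]
  have hDen : x * (1 - x) + (1 - 2 * x) * (y - x) / 3 ≠ 0 := by
    intro h; nlinarith [hQ]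
  have hnum : HasDerivAt (fun t : ℝ => (1/2) * (y - t) ^ 2) ((1/2) * (2 * (y - x) ^ 1 * (-1))) x :=
    (((hasDerivAt_id x).const_sub y).pow 2).const_mul _
  have hden : HasDerivAt (fun t : ℝ => t * (1 - t) + (1 - 2 * t) * (y - t) / 3)
      ((1 * (1 - x) + x * (-1)) + (((-2) * (y - x) + (1 - 2 * x) * (-1)) / 3)) x := by
    have h1 : HasDerivAt (fun t : ℝ => t * (1 - t)) (1 * (1 - x) + x * (-1)) x :=
      (hasDerivAt_id x).mul ((hasDerivAt_id x).const_sub 1)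
    have h2 : HasDerivAt (fun t : ℝ => (1 - 2 * t) * (y - t) / 3)
        (((-2) * (y - x) + (1 - 2 * x) * (-1)) / 3) x := by
      have h3 : HasDerivAt (fun t : ℝ => (1 - 2 * t) * (y - t)) ((-2) * (y - x) + (1 - 2 * x) * (-1)) x := by
        have := (((hasDerivAt_id x).const_mul 2).const_sub 1).mul ((hasDerivAt_id x).const_sub y)
        exact this.congr_deriv (by simp only [id]; ring)
      exact h3.div_const 3
    exact h1.add h2
  have hd : HasDerivAt (fun t => dLow y t)
      (((1/2) * (2 * (y - x) ^ 1 * (-1)) * (x * (1 - x) + (1 - 2 * x) * (y - x) / 3)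
        - (1/2) * (y - x) ^ 2 * ((1 * (1 - x) + x * (-1)) + (((-2) * (y - x) + (1 - 2 * x) * (-1)) / 3)))
        / (x * (1 - x) + (1 - 2 * x) * (y - x) / 3) ^ 2) x := by
    exact hnum.div hden hDen
  have hlog1 : HasDerivAt (fun t : ℝ => Real.log (y / t)) (-x⁻¹) x := by
    have h : HasDerivAt (fun t : ℝ => Real.log y - Real.log t) (-x⁻¹) x := by
      simpa using (Real.hasDerivAt_log hxne).const_sub (Real.log y)
    apply h.congr_of_eventuallyEq
    filter_upwards [eventually_gt_nhds hx0] with t ht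
    rw [Real.log_div (ne_of_gt hy0) (ne_of_gt ht)]
  have hlog2 : HasDerivAt (fun t : ℝ => Real.log ((1 - y) / (1 - t))) ((1 - x)⁻¹) x := by
    have hinner : HasDerivAt (fun t : ℝ => (1:ℝ) - t) (-1) x := (hasDerivAt_id x).const_sub 1
    have h : HasDerivAt (fun t : ℝ => Real.log (1 - y) - Real.log (1 - t)) ((1 - x)⁻¹) x := by
      have := ((Real.hasDerivAt_log h1xne).comp x hinner).const_sub (Real.log (1 - y))
      simpa using this
    apply h.congr_of_eventuallyEq
    have : ∀ᶠ t : ℝ in nhds x, 0 < 1 - t := by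
      have : ∀ᶠ t : ℝ in nhds x, t < 1 := eventually_lt_nhds hx1
      filter_upwards [this] with t ht; linarith
    filter_upwards [this] with t ht
    rw [Real.log_div (by linarith) (ne_of_gt ht)]
  have hb : HasDerivAt (fun t => bernKL y t) (y * (-x⁻¹) + (1 - y) * (1 - x)⁻¹) x := by
    exact (hlog1.const_mul y).add (hlog2.const_mul (1 - y))
  constructor
  · refine (hd.sub hb).congr_deriv ?_
    have hQne : y - x * (x + 2 * y - 2) ≠ 0 := ne_of_gt hQ
    have hrw : x * (1 - x) + (1 - 2 * x) * (y - x) / 3 = (y - x * (x + 2 * y - 2)) / 3 := by ring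
    rw [hrw]
    field_simp
    ring
  · apply div_nonneg
    · apply mul_nonneg
      · nlinarith
      · exact pow_nonneg (by linarith) 3
    · exact (mul_pos (mul_pos hx0 h1x) (pow_pos hQ 2)).le
end

section
/- Middle-term bound: let β ∈ (0, 1/2], q ≥ 2 an integer, V(x) = (x(1-x))^β, and ψ_i(x) = Σ_{j=i+1}^q C(q,j)x^j(1-x)^{q-j}. Then for all x ∈ [1/2, 1], (1/q)·V(ψ_{⌈qx⌉-1}(x)) ≤ (2x(1-x))^β / √(2q). -/
/-- Binomial tail probability `ψ_i(x) = P(Bin(q,x) ≥ i+1)`. -/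
noncomputable def psi (q i : ℕ) (x : ℝ) : ℝ :=
  ∑ j ∈ Finset.Icc (i + 1) q, (q.choose j : ℝ) * x ^ j * (1 - x) ^ (q - j)

lemma psi_nonneg (q i : ℕ) {x : ℝ} (h0 : 0 ≤ x) (h1 : x ≤ 1) : 0 ≤ psi q i x := by
  apply Finset.sum_nonneg
  intro j _
  exact mul_nonneg (mul_nonneg (by positivity) (pow_nonneg h0 _))
    (pow_nonneg (by linarith) _)

lemma psi_le_one (q i : ℕ) {x : ℝ} (h0 : 0 ≤ x) (h1 : x ≤ 1) : psi q i x ≤ 1 := by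
  have h : psi q i x ≤ ∑ j ∈ Finset.range (q + 1),
      (q.choose j : ℝ) * x ^ j * (1 - x) ^ (q - j) := by
    apply Finset.sum_le_sum_of_subset_of_nonneg
    · intro j hj
      simp only [Finset.mem_Icc, Finset.mem_range] at hj ⊢
      omega
    · intro j _ _
      exact mul_nonneg (mul_nonneg (by positivity) (pow_nonneg h0 _))
        (pow_nonneg (by linarith) _)
  have h2 : ∑ j ∈ Finset.range (q + 1),
      (q.choose j : ℝ) * x ^ j * (1 - x) ^ (q - j) = (x + (1 - x)) ^ q := by
    rw [add_pow]
    exact Finset.sum_congr rfl fun j _ => by ring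
  rw [h2, show x + (1 - x) = 1 by ring, one_pow] at h
  exact h

lemma psi_top (q : ℕ) (hq : 1 ≤ q) (x : ℝ) : psi q (q - 1) x = x ^ q := by
  unfold psi
  have : q - 1 + 1 = q := by omega
  rw [this, Finset.Icc_self, Finset.sum_singleton, Nat.choose_self, Nat.sub_self]
  simp

lemma key_bound (q : ℕ) (hq : 2 ≤ q) {x : ℝ} (hx1 : 1 / 2 ≤ x) (hx2 : x ≤ 1) :
    psi q (⌈(q : ℝ) * x⌉₊ - 1) x * (1 - psi q (⌈(q : ℝ) * x⌉₊ - 1) x)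
      ≤ (q : ℝ) * x * (1 - x) := by
  have h0 : (0 : ℝ) ≤ x := by linarith
  have hqR : (2 : ℝ) ≤ (q : ℝ) := by exact_mod_cast hq
  by_cases h : (1 : ℝ) / 4 ≤ (q : ℝ) * x * (1 - x)
  · set t := psi q (⌈(q : ℝ) * x⌉₊ - 1) x with ht
    have h1 : 0 ≤ t := psi_nonneg _ _ h0 hx2
    have h2 : t ≤ 1 := psi_le_one _ _ h0 hx2
    nlinarith [sq_nonneg (t - 1 / 2)]
  · push_neg at h
    -- then x is very close to 1 and ⌈qx⌉ = q
    have hq1x : (q : ℝ) * (1 - x) < 1 / 2 := by nlinarith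
    have hlt : ((q - 1 : ℕ) : ℝ) < (q : ℝ) * x := by
      have : ((q - 1 : ℕ) : ℝ) = (q : ℝ) - 1 := by
        have : (1 : ℕ) ≤ q := by omega
        push_cast [Nat.cast_sub this]
        ring
      rw [this]; nlinarith
    have hceil_ge : q - 1 < ⌈(q : ℝ) * x⌉₊ := Nat.lt_ceil.mpr hlt
    have hceil_le : ⌈(q : ℝ) * x⌉₊ ≤ q := by
      apply Nat.ceil_le.mpr
      nlinarith
    have hceil : ⌈(q : ℝ) * x⌉₊ = q := by omega
    rw [hceil, psi_top q (by omega) x]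
    have hb : 1 - (q : ℝ) * (1 - x) ≤ x ^ q := by
      have := one_add_mul_le_pow (a := x - 1) (by linarith) q
      simp only [add_sub_cancel] at this
      calc 1 - (q : ℝ) * (1 - x) = 1 + (q : ℝ) * (x - 1) := by ring
        _ ≤ x ^ q := this
    have hxq1 : x ^ q ≤ 1 := pow_le_one₀ h0 hx2
    have hxqx : x ^ q ≤ x := pow_le_of_le_one h0 hx2 (by omega)
    have hxq0 : 0 ≤ x ^ q := pow_nonneg h0 q
    have : x ^ q * (1 - x ^ q) ≤ x * ((q : ℝ) * (1 - x)) :=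
      mul_le_mul hxqx (by linarith) (by linarith) h0
    nlinarith

theorem stmt_12 (q : ℕ) (hq : 2 ≤ q) (β : ℝ) (hβ : β ∈ Set.Ioc (0 : ℝ) (1 / 2))
    (x : ℝ) (hx : x ∈ Set.Icc (1 / 2 : ℝ) 1) :
    (1 / (q : ℝ)) *
        (psi q (⌈(q : ℝ) * x⌉₊ - 1) x * (1 - psi q (⌈(q : ℝ) * x⌉₊ - 1) x)) ^ β
      ≤ (2 * x * (1 - x)) ^ β / Real.sqrt (2 * q) := by
  obtain ⟨hβ0, hβ1⟩ := hβ
  obtain ⟨hx1, hx2⟩ := hx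
  have h0 : (0 : ℝ) ≤ x := by linarith
  have hqR : (2 : ℝ) ≤ (q : ℝ) := by exact_mod_cast hq
  set t := psi q (⌈(q : ℝ) * x⌉₊ - 1) x with ht
  have ht0 : 0 ≤ t := psi_nonneg _ _ h0 hx2
  have ht1 : t ≤ 1 := psi_le_one _ _ h0 hx2
  have hkey : t * (1 - t) ≤ (q : ℝ) * x * (1 - x) := key_bound q hq hx1 hx2
  have hB0 : (0 : ℝ) ≤ 2 * x * (1 - x) := by nlinarith
  -- step 1: rpow monotone
  have h1 : (t * (1 - t)) ^ β ≤ ((q : ℝ) * x * (1 - x)) ^ β :=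
    Real.rpow_le_rpow (by nlinarith) hkey (le_of_lt hβ0)
  -- step 2: factor
  have h2 : ((q : ℝ) * x * (1 - x)) ^ β = ((q : ℝ) / 2) ^ β * (2 * x * (1 - x)) ^ β := by
    rw [← Real.mul_rpow (by positivity) hB0]
    ring_nf
  -- step 3: (q/2)^β ≤ (q/2)^(1/2) = sqrt(2q)/2
  have h3 : ((q : ℝ) / 2) ^ β ≤ ((q : ℝ) / 2) ^ ((1 : ℝ) / 2) :=
    Real.rpow_le_rpow_of_exponent_le (by linarith) hβ1
  have hs : Real.sqrt (2 * q) > 0 := Real.sqrt_pos.mpr (by positivity)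
  have hs2 : Real.sqrt (2 * q) ^ 2 = 2 * q := Real.sq_sqrt (by positivity)
  have ha : (Real.sqrt (2 * ↑q) / 2) ^ 2 = (q : ℝ) / 2 := by
    rw [div_pow, hs2]; ring
  have h4 : ((q : ℝ) / 2) ^ ((1 : ℝ) / 2) = Real.sqrt (2 * q) / 2 := by
    rw [← Real.sqrt_eq_rpow, ← ha, Real.sqrt_sq (by positivity)]
  have h5 : (t * (1 - t)) ^ β ≤ Real.sqrt (2 * q) / 2 * (2 * x * (1 - x)) ^ β := by
    calc (t * (1 - t)) ^ β ≤ ((q : ℝ) / 2) ^ β * (2 * x * (1 - x)) ^ β := by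
          rw [← h2]; exact h1
      _ ≤ Real.sqrt (2 * q) / 2 * (2 * x * (1 - x)) ^ β := by
          apply mul_le_mul_of_nonneg_right _ (Real.rpow_nonneg hB0 β)
          rw [← h4]; exact h3
  have hq0 : (0 : ℝ) < q := by linarith
  have hinv : (Real.sqrt (2 * ↑q))⁻¹ = Real.sqrt (2 * ↑q) / (2 * ↑q) := by
    rw [eq_div_iff (by positivity : (2:ℝ) * ↑q ≠ 0), ← hs2, pow_two]
    field_simp
    rw [Real.sqrt_sq hs.le]
  calc 1 / (q : ℝ) * (t * (1 - t)) ^ β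
      ≤ 1 / (q : ℝ) * (Real.sqrt (2 * q) / 2 * (2 * x * (1 - x)) ^ β) := by
        apply mul_le_mul_of_nonneg_left h5 (by positivity)
    _ = (2 * x * (1 - x)) ^ β * (Real.sqrt (2 * ↑q) / (2 * ↑q)) := by
        field_simp
    _ = (2 * x * (1 - x)) ^ β / Real.sqrt (2 * ↑q) := by
        rw [← hinv, ← div_eq_mul_inv]
end

section
/- Duality of erasure indicator: for an integer m ≥ 1, 0 ≤ i ≤ m-1, 0 ≤ d ≤ m, and prime power q, the erasure probability ρ(m,i,d,q) = P(e_1 ∉ colspace(G_S^{(i)})), where G^{(i)} is a uniformly random full-rank (m-i)×m matrix over 𝔽_q and S is any fixed d-element subset of columns, satisfies ρ(m,i,d,q) = 1 - ρ(m, m-i-1, m-d, q). -/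
open scoped Classical

/-- The fraction of uniformly random full-rank `k × m` matrices `G` over `F` for which
the first standard basis vector `e₁` is **not** in the column space of the submatrix `G_S`
formed by keeping the columns indexed by `S`. -/
noncomputable def erasureProb (F : Type) [Field F] [Fintype F] (k m : ℕ)
    (S : Finset (Fin m)) : ℝ :=
  ((Finset.univ.filter fun G : Matrix (Fin k) (Fin m) F =>
      G.rank = k ∧
        ¬∃ v : {a // a ∈ S} → F,
            (G.submatrix id (fun s : {a // a ∈ S} => (s : Fin m))).mulVec v =
              fun r : Fin k => if (r : ℕ) = 0 then 1 else 0).card : ℝ) /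
    ((Finset.univ.filter fun G : Matrix (Fin k) (Fin m) F => G.rank = k).card : ℝ)

open Module Submodule

namespace StmtAux

variable {F : Type} [Field F] [Fintype F]

/-- dual pairing via standard basis -/
noncomputable def eps (n : ℕ) : (Fin n → F) ≃ₗ[F] Module.Dual F (Fin n → F) :=
  (Pi.basisFun F (Fin n)).toDualEquiv

lemma eps_apply {n : ℕ} (y x : Fin n → F) : eps n y x = ∑ i, x i * y i := by
  have hx : x = ∑ i, x i • Pi.basisFun F (Fin n) i := by
    simp [Pi.basisFun_apply]
    ext j; simp [Finset.sum_apply, Pi.single_apply]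
  calc eps n y x = eps n y (∑ i, x i • Pi.basisFun F (Fin n) i) := by rw [← hx]
    _ = ∑ i, x i * eps n y (Pi.basisFun F (Fin n) i) := by
        rw [map_sum]; simp [smul_eq_mul]
    _ = ∑ i, x i * y i := by
        congr 1; ext i
        have : eps n y (Pi.basisFun F (Fin n) i) = y i := by
          have h : (Pi.basisFun F (Fin n)).toDual y (Pi.single i 1) = y i := by
            simpa using (Pi.basisFun F (Fin n)).toDual_apply_left y i
          rw [eps, Basis.toDualEquiv_apply, Pi.basisFun_apply]; exact h
        rw [this]

/-- orthogonal complement w.r.t. the dot product -/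
noncomputable def perp {n : ℕ} (U : Submodule F (Fin n → F)) : Submodule F (Fin n → F) :=
  U.dualAnnihilator.comap (eps n).toLinearMap

lemma mem_perp {n : ℕ} {U : Submodule F (Fin n → F)} {y : Fin n → F} :
    y ∈ perp U ↔ ∀ x ∈ U, ∑ i, x i * y i = 0 := by
  simp only [perp, Submodule.mem_comap, Submodule.mem_dualAnnihilator]
  constructor
  · intro h x hx; simpa [eps_apply] using h x hx
  · intro h x hx; simpa [eps_apply] using h x hx

lemma perp_eq_map {n : ℕ} (U : Submodule F (Fin n → F)) :
    perp U = U.dualAnnihilator.map (eps n).symm.toLinearMap := by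
  rw [perp, Submodule.comap_equiv_eq_map_symm]

lemma finrank_perp {n : ℕ} (U : Submodule F (Fin n → F)) :
    finrank F (perp U) + finrank F U = n := by
  rw [perp_eq_map]
  have h1 : finrank F (U.dualAnnihilator.map (eps n).symm.toLinearMap) = finrank F U.dualAnnihilator :=
    LinearEquiv.finrank_map_eq _ _
  have h2 : finrank F U.dualAnnihilator = finrank F ((Fin n → F) ⧸ U) :=
    (LinearEquiv.finrank_eq (Subspace.quotEquivAnnihilator U)).symm
  rw [h1, h2, Submodule.finrank_quotient_add_finrank]
  simp [Module.finrank_pi]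

lemma perp_inf {n : ℕ} (U W : Submodule F (Fin n → F)) :
    perp (U ⊓ W) = perp U ⊔ perp W := by
  rw [perp_eq_map, perp_eq_map, perp_eq_map, Subspace.dualAnnihilator_inf_eq,
    Submodule.map_sup]

lemma le_perp_perp {n : ℕ} (U : Submodule F (Fin n → F)) : U ≤ perp (perp U) := by
  intro x hx
  rw [mem_perp]
  intro y hy
  rw [mem_perp] at hy
  have := hy x hx
  rw [← this]
  exact Finset.sum_congr rfl fun i _ => mul_comm _ _

lemma perp_perp {n : ℕ} (U : Submodule F (Fin n → F)) : perp (perp U) = U := by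
  refine (Submodule.eq_of_le_of_finrank_eq (le_perp_perp U) ?_).symm
  have h1 := finrank_perp U
  have h2 := finrank_perp (perp U)
  omega


section Event

variable {m : ℕ}

/-- first standard basis vector of `F^n` -/
def ee (n : ℕ) : Fin n → F := fun r => if (r : ℕ) = 0 then 1 else 0

lemma sum_mul_ee {n : ℕ} [NeZero n] (x : Fin n → F) :
    ∑ i, ee n i * x i = x 0 := by
  rw [Finset.sum_eq_single (0 : Fin n)]
  · simp [ee]
  · intro b _ hb
    have : (b : ℕ) ≠ 0 := fun h => hb (by ext; simp [h])
    simp [ee, this]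
  · simp

lemma sum_ee_mul {n : ℕ} [NeZero n] (x : Fin n → F) :
    ∑ i, x i * ee n i = x 0 := by
  rw [← sum_mul_ee x]; exact Finset.sum_congr rfl fun i _ => mul_comm _ _

lemma ee_zero {n : ℕ} [NeZero n] : ee n (0 : Fin n) = (1 : F) := by simp [ee]

lemma ee_ne_zero {n : ℕ} [NeZero n] : (ee n : Fin n → F) ≠ 0 := by
  intro h
  have := congr_fun h (0 : Fin n)
  rw [ee_zero] at this
  exact one_ne_zero this

lemma ee_mem_perp_iff {n : ℕ} [NeZero n] (U : Submodule F (Fin n → F)) :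
    (ee n : Fin n → F) ∈ perp U ↔ ∀ x ∈ U, x 0 = 0 := by
  rw [mem_perp]
  constructor
  · intro h x hx; rw [← sum_ee_mul x]; exact h x hx
  · intro h x hx; rw [sum_ee_mul x]; exact h x hx

/-- The subspace of vectors vanishing on succ-coordinates in `T`. -/
def WT (T : Finset (Fin m)) : Submodule F (Fin (m + 1) → F) where
  carrier := {x | ∀ j ∈ T, x j.succ = 0}
  add_mem' := by intro a b ha hb j hj; simp [ha j hj, hb j hj]
  zero_mem' := by intro j hj; simp
  smul_mem' := by intro c a ha j hj; simp [ha j hj]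

lemma mem_WT {T : Finset (Fin m)} {x : Fin (m + 1) → F} :
    x ∈ WT T ↔ ∀ j ∈ T, x j.succ = 0 := Iff.rfl

/-- The subspace of vectors vanishing at 0 and on succ-coordinates outside `T`. -/
def WT' (T : Finset (Fin m)) : Submodule F (Fin (m + 1) → F) where
  carrier := {x | x 0 = 0 ∧ ∀ j ∉ T, x j.succ = 0}
  add_mem' := by
    intro a b ha hb
    exact ⟨by simp [ha.1, hb.1], fun j hj => by simp [ha.2 j hj, hb.2 j hj]⟩
  zero_mem' := ⟨rfl, fun j _ => rfl⟩
  smul_mem' := by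
    intro c a ha
    exact ⟨by simp [ha.1], fun j hj => by simp [ha.2 j hj]⟩

lemma mem_WT' {T : Finset (Fin m)} {x : Fin (m + 1) → F} :
    x ∈ WT' T ↔ x 0 = 0 ∧ ∀ j ∉ T, x j.succ = 0 := Iff.rfl

lemma perp_WT (T : Finset (Fin m)) : perp (WT T : Submodule F (Fin (m+1) → F)) = WT' T := by
  ext y
  rw [mem_perp, mem_WT']
  constructor
  · intro h
    constructor
    · have h0 := h (ee (m+1)) (by intro j hj; simp [ee, Fin.succ_ne_zero j])
      rw [← sum_ee_mul y]
      rw [← h0]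
      exact Finset.sum_congr rfl fun i _ => mul_comm _ _
    · intro j hj
      have hx : (Pi.single j.succ 1 : Fin (m+1) → F) ∈ WT T := by
        intro j' hj'
        have : j'.succ ≠ j.succ := by
          intro hcontra
          exact hj (by rwa [Fin.succ_inj.mp hcontra] at hj')
        simp [Pi.single_apply, this]
      have := h _ hx
      rwa [Finset.sum_eq_single j.succ (by
          intro b _ hb; simp [Pi.single_apply, hb]) (by simp), Pi.single_eq_same, one_mul] at this
  · rintro ⟨h0, h1⟩ x hx
    rw [Fin.sum_univ_succ]
    have : x 0 * y 0 = 0 := by rw [h0, mul_zero]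
    rw [this, zero_add]
    apply Finset.sum_eq_zero
    intro j _
    by_cases hj : j ∈ T
    · rw [hx j hj, zero_mul]
    · rw [h1 j hj, mul_zero]

/-- The erasure event on the kernel subspace level. -/
def Ev (T : Finset (Fin m)) (D : Submodule F (Fin (m + 1) → F)) : Prop :=
  ∃ x ∈ D, x 0 ≠ 0 ∧ ∀ j ∈ T, x j.succ = 0

lemma exists_iff_ee_not_mem_perp (U : Submodule F (Fin (m+1) → F)) :
    (∃ x ∈ U, x 0 ≠ 0) ↔ (ee (m+1) : Fin (m+1) → F) ∉ perp U := by
  rw [ee_mem_perp_iff]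
  push_neg
  rfl

lemma ee_mem_sup_iff (D : Submodule F (Fin (m+1) → F)) (T : Finset (Fin m)) :
    (ee (m+1) : Fin (m+1) → F) ∈ perp D ⊔ WT' T ↔
      ∃ y ∈ perp D, y 0 ≠ 0 ∧ ∀ j ∉ T, y j.succ = 0 := by
  constructor
  · rw [Submodule.mem_sup]
    rintro ⟨u, hu, w, hw, huw⟩
    refine ⟨u, hu, ?_, ?_⟩
    · have : u 0 = 1 := by
        have := congr_fun huw 0
        rw [mem_WT'] at hw
        simp [hw.1, ee_zero] at this
        simpa using this
      rw [this]; exact one_ne_zero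
    · intro j hj
      have := congr_fun huw j.succ
      rw [mem_WT'] at hw
      have he : ee (m+1) (j.succ : Fin (m+1)) = (0 : F) := by
        simp [ee, Fin.succ_ne_zero j]
      rw [Pi.add_apply, hw.2 j hj, add_zero] at this
      rw [this, he]
  · rintro ⟨y, hy, hy0, hyT⟩
    rw [Submodule.mem_sup]
    refine ⟨(y 0)⁻¹ • y, Submodule.smul_mem _ _ hy, ee (m+1) - (y 0)⁻¹ • y, ?_, by abel⟩
    rw [mem_WT']
    constructor
    · simp [ee_zero, inv_mul_cancel₀ hy0]
    · intro j hj
      have he : ee (m+1) (j.succ : Fin (m+1)) = (0 : F) := by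
        simp [ee, Fin.succ_ne_zero j]
      simp [he, hyT j hj]

/-- Key duality: the event for `D` and `T` is the negation of the event for `perp D`, `Tᶜ`. -/
lemma ev_dual (D : Submodule F (Fin (m+1) → F)) (T : Finset (Fin m)) :
    Ev T D ↔ ¬ Ev Tᶜ (perp D) := by
  have h1 : Ev T D ↔ ∃ x ∈ D ⊓ WT T, x 0 ≠ 0 := by
    unfold Ev
    constructor
    · rintro ⟨x, hx, h0, hT⟩; exact ⟨x, ⟨hx, hT⟩, h0⟩
    · rintro ⟨x, ⟨hx, hT⟩, h0⟩; exact ⟨x, hx, h0, hT⟩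
  rw [h1, exists_iff_ee_not_mem_perp, perp_inf, perp_WT]
  rw [ee_mem_sup_iff]
  apply not_congr
  unfold Ev
  constructor
  · rintro ⟨y, hy, h0, hT⟩
    exact ⟨y, hy, h0, fun j hj => hT j (Finset.mem_compl.mp hj)⟩
  · rintro ⟨y, hy, h0, hT⟩
    exact ⟨y, hy, h0, fun j hj => hT j (Finset.mem_compl.mpr hj)⟩

/-- goodness: `D` arises as a kernel of an augmented full-rank matrix -/
def good (D : Submodule F (Fin (m+1) → F)) : Prop :=
  (ee (m+1) : Fin (m+1) → F) ∉ D ∧ ∃ x ∈ D, x 0 ≠ 0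

lemma ee_mem_iff_perp (D : Submodule F (Fin (m+1) → F)) :
    (ee (m+1) : Fin (m+1) → F) ∈ D ↔ ∀ y ∈ perp D, y 0 = 0 := by
  conv_lhs => rw [← perp_perp D]
  exact ee_mem_perp_iff (perp D)

lemma good_perp_iff (D : Submodule F (Fin (m+1) → F)) :
    good (perp D) ↔ good D := by
  unfold good
  rw [ee_mem_perp_iff, ee_mem_iff_perp]
  push_neg
  tauto

end Event

section Transfer

variable {m : ℕ}

lemma ee_eq_single {n : ℕ} [NeZero n] : (ee n : Fin n → F) = Pi.single 0 1 := by
  ext r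
  by_cases h : r = 0
  · subst h; simp [ee]
  · have : (r : ℕ) ≠ 0 := fun hc => h (by ext; simp [hc])
    simp [ee, this, Pi.single_apply, h]

/-- the augmented linear map `x ↦ x 0 • e₁ + G (x ∘ succ)` -/
noncomputable def LL (k m : ℕ) (G : Matrix (Fin k) (Fin m) F) :
    (Fin (m+1) → F) →ₗ[F] (Fin k → F) :=
  (LinearMap.proj (0 : Fin (m+1))).smulRight (ee k)
    + G.mulVecLin ∘ₗ LinearMap.funLeft F F Fin.succ

lemma LL_apply {k : ℕ} (G : Matrix (Fin k) (Fin m) F) (x : Fin (m+1) → F) :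
    LL k m G x = x 0 • ee k + G.mulVec (fun j => x j.succ) := by
  simp [LL, Matrix.mulVecLin_apply]
  rfl

lemma ee_succ_zero {j : Fin m} : (ee (m+1) : Fin (m+1) → F) j.succ = 0 := by
  simp [ee, Fin.succ_ne_zero j]

lemma LL_ee {k : ℕ} [NeZero k] (G : Matrix (Fin k) (Fin m) F) :
    LL k m G (ee (m+1)) = ee k := by
  rw [LL_apply]
  have h1 : (ee (m+1) : Fin (m+1) → F) 0 = 1 := ee_zero
  have h2 : (fun j => (ee (m+1) : Fin (m+1) → F) j.succ) = (0 : Fin m → F) := by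
    funext j; exact ee_succ_zero
  rw [h1, h2, Matrix.mulVec_zero, one_smul, add_zero]

lemma mulVec_single_col {k : ℕ} (G : Matrix (Fin k) (Fin m) F) (j : Fin m) (r : Fin k) :
    G.mulVec (Pi.single j 1) r = G r j := by
  unfold Matrix.mulVec dotProduct
  rw [Finset.sum_eq_single j]
  · simp
  · intro b _ hb; simp [Pi.single_apply, hb]
  · simp

lemma LL_single_succ {k : ℕ} (G : Matrix (Fin k) (Fin m) F) (j : Fin m) :
    LL k m G (Pi.single j.succ 1) = fun r => G r j := by
  rw [LL_apply]
  have h0 : (Pi.single j.succ (1:F) : Fin (m+1) → F) 0 = 0 :=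
    Pi.single_eq_of_ne (Ne.symm (Fin.succ_ne_zero j)) 1
  have h1 : (fun l : Fin m => (Pi.single j.succ (1:F) : Fin (m+1) → F) l.succ) = Pi.single j (1:F) := by
    funext l
    by_cases h : l = j
    · subst h; simp
    · rw [Pi.single_eq_of_ne (fun hc => h (Fin.succ_inj.mp hc)) 1,
        Pi.single_eq_of_ne h 1]
  rw [h0, h1, zero_smul, zero_add]
  funext r
  exact mulVec_single_col G j r

/-- any nonzero vector with nonzero 0-coordinate can be mapped to `e₁` -/
lemma exists_equiv_c0 {k : ℕ} [NeZero k] (c : Fin k → F) (hc : c 0 ≠ 0) :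
    ∃ σ : (Fin k → F) ≃ₗ[F] (Fin k → F), σ c = ee k := by
  set u : Fin k → F := ee k - c with hu
  have hu0 : u 0 = 1 - c 0 := by simp [hu, ee_zero]
  refine ⟨LinearEquiv.ofLinear
    (LinearMap.id + ((c 0)⁻¹ • LinearMap.proj (0 : Fin k)).smulRight u)
    (LinearMap.id - (LinearMap.proj (0 : Fin k)).smulRight u) ?_ ?_, ?_⟩
  · refine LinearMap.ext fun y => funext fun j => ?_
    simp only [LinearMap.coe_comp, Function.comp_apply, LinearMap.add_apply,
      LinearMap.sub_apply, LinearMap.id_apply, LinearMap.smulRight_apply,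
      LinearMap.smul_apply, LinearMap.proj_apply, Pi.add_apply, Pi.sub_apply,
      Pi.smul_apply, smul_eq_mul, LinearMap.id_coe, id_eq]
    rw [hu0]
    field_simp
    ring
  · refine LinearMap.ext fun y => funext fun j => ?_
    simp only [LinearMap.coe_comp, Function.comp_apply, LinearMap.add_apply,
      LinearMap.sub_apply, LinearMap.id_apply, LinearMap.smulRight_apply,
      LinearMap.smul_apply, LinearMap.proj_apply, Pi.add_apply, Pi.sub_apply,
      Pi.smul_apply, smul_eq_mul, LinearMap.id_coe, id_eq]
    rw [hu0]
    field_simp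
    ring
  · show c + ((c 0)⁻¹ * c 0) • u = ee k
    rw [inv_mul_cancel₀ hc, one_smul, hu]
    abel

lemma exists_equiv_to_ee {k : ℕ} [NeZero k] (c : Fin k → F) (hc : c ≠ 0) :
    ∃ σ : (Fin k → F) ≃ₗ[F] (Fin k → F), σ c = ee k := by
  obtain ⟨i, hi⟩ : ∃ i, c i ≠ 0 := by
    by_contra h
    push_neg at h
    exact hc (funext h)
  set s : (Fin k → F) ≃ₗ[F] (Fin k → F) :=
    LinearEquiv.funCongrLeft F F (Equiv.swap (0 : Fin k) i) with hs
  have hs0 : s c 0 = c i := by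
    simp [hs, LinearEquiv.funCongrLeft, Equiv.swap_apply_left]
  obtain ⟨τ, hτ⟩ := exists_equiv_c0 (s c) (by rw [hs0]; exact hi)
  exact ⟨s.trans τ, by simp [LinearEquiv.trans_apply, hτ]⟩

/-- existence of a normalized parity map for each good subspace -/
lemma exists_p {k : ℕ} (hk : 0 < k) (hkm : k ≤ m) (D : Submodule F (Fin (m+1) → F))
    (hdim : finrank F D = m + 1 - k) (hgood : good D) :
    ∃ p : (Fin (m+1) → F) →ₗ[F] (Fin k → F),
      LinearMap.ker p = D ∧ Function.Surjective p ∧ p (ee (m+1)) = ee k := by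
  haveI : NeZero k := ⟨hk.ne'⟩
  have hfr : finrank F ((Fin (m+1) → F) ⧸ D) = k := by
    have h := Submodule.finrank_quotient_add_finrank D
    rw [hdim] at h
    simp only [Module.finrank_pi, Fintype.card_fin] at h
    omega
  have hfr2 : finrank F ((Fin (m+1) → F) ⧸ D) = finrank F (Fin k → F) := by
    rw [hfr, Module.finrank_pi, Fintype.card_fin]
  let ι : ((Fin (m+1) → F) ⧸ D) ≃ₗ[F] (Fin k → F) := LinearEquiv.ofFinrankEq _ _ hfr2
  have hne : ι (Submodule.Quotient.mk (ee (m+1))) ≠ 0 := by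
    intro h
    rw [map_eq_zero_iff _ ι.injective, Submodule.Quotient.mk_eq_zero] at h
    exact hgood.1 h
  obtain ⟨σ, hσ⟩ := exists_equiv_to_ee _ hne
  refine ⟨σ.toLinearMap ∘ₗ ι.toLinearMap ∘ₗ D.mkQ, ?_, ?_, ?_⟩
  · ext x
    simp only [LinearMap.mem_ker, LinearMap.coe_comp, Function.comp_apply,
      LinearEquiv.coe_coe, Submodule.mkQ_apply]
    rw [map_eq_zero_iff _ σ.injective, map_eq_zero_iff _ ι.injective,
      Submodule.Quotient.mk_eq_zero]
  · exact σ.surjective.comp (ι.surjective.comp (Submodule.mkQ_surjective D))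
  · simpa using hσ

noncomputable instance {n : ℕ} : Fintype (Submodule F (Fin n → F)) :=
  have : Finite (Submodule F (Fin n → F)) :=
    Finite.of_injective _ SetLike.coe_injective
  Fintype.ofFinite _

instance {k : ℕ} : Finite ((Fin k → F) ≃ₗ[F] (Fin k → F)) :=
  Finite.of_injective (fun e => (e : (Fin k → F) → (Fin k → F)))
    (fun a b h => by
      apply LinearEquiv.toLinearMap_injective
      apply LinearMap.ext
      exact fun x => congr_fun h x)

/-- stabilizer of `e₁` in the general linear group -/
def Stab (F : Type) [Field F] (k : ℕ) :=
  {B : (Fin k → F) ≃ₗ[F] (Fin k → F) // B (ee k) = ee k}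

instance {k : ℕ} : Finite (Stab F k) := Subtype.finite

instance {k : ℕ} : Nonempty (Stab F k) := ⟨⟨LinearEquiv.refl F _, rfl⟩⟩

lemma rank_eq_of_surj {k : ℕ} (G : Matrix (Fin k) (Fin m) F)
    (h : Function.Surjective G.mulVecLin) : G.rank = k := by
  rw [show G.rank = finrank F (LinearMap.range G.mulVecLin) from rfl,
    LinearMap.range_eq_top.mpr h, finrank_top, Module.finrank_pi, Fintype.card_fin]

lemma surj_of_rank_eq {k : ℕ} (G : Matrix (Fin k) (Fin m) F)
    (h : G.rank = k) : Function.Surjective G.mulVecLin := by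
  rw [← LinearMap.range_eq_top]
  apply Submodule.eq_top_of_finrank_eq
  rw [show finrank F (LinearMap.range G.mulVecLin) = G.rank from rfl, h,
    Module.finrank_pi, Fintype.card_fin]

lemma LL_surj_of_rank {k : ℕ} (G : Matrix (Fin k) (Fin m) F) (h : G.rank = k) :
    Function.Surjective (LL k m G) := by
  intro y
  obtain ⟨v, hv⟩ := surj_of_rank_eq G h y
  refine ⟨Fin.cons 0 v, ?_⟩
  rw [LL_apply]
  simp only [Fin.cons_zero, Fin.cons_succ, zero_smul, zero_add]
  rw [Matrix.mulVecLin_apply] at hv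
  exact hv

lemma ker_LL_mem {k : ℕ} (hk : 0 < k) (G : Matrix (Fin k) (Fin m) F) (h : G.rank = k) :
    finrank F (LinearMap.ker (LL k m G)) = m + 1 - k ∧ good (LinearMap.ker (LL k m G)) := by
  haveI : NeZero k := ⟨hk.ne'⟩
  have hsurj := LL_surj_of_rank G h
  constructor
  · have := LinearMap.finrank_range_add_finrank_ker (LL k m G)
    rw [LinearMap.range_eq_top.mpr hsurj, finrank_top] at this
    simp only [Module.finrank_pi, Fintype.card_fin] at this
    omega
  · constructor
    · intro hc
      rw [LinearMap.mem_ker, LL_ee] at hc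
      exact ee_ne_zero hc
    · obtain ⟨v, hv⟩ := surj_of_rank_eq G h (ee k)
      refine ⟨Fin.cons (-1) v, ?_, ?_⟩
      · rw [LinearMap.mem_ker, LL_apply]
        simp only [Fin.cons_zero, Fin.cons_succ]
        rw [Matrix.mulVecLin_apply] at hv
        rw [hv]
        abel_nf
        simp
      · simp only [Fin.cons_zero]
        exact neg_ne_zero.mpr one_ne_zero

/-- The fiber over a good subspace is in bijection with the stabilizer. -/
lemma fiber_card {k : ℕ} (hk : 0 < k) (hkm : k ≤ m) (D : Submodule F (Fin (m+1) → F))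
    (hdim : finrank F D = m + 1 - k) (hgood : good D) :
    Nat.card {G : Matrix (Fin k) (Fin m) F //
        G.rank = k ∧ LinearMap.ker (LL k m G) = D}
      = Nat.card (Stab F k) := by
  haveI : NeZero k := ⟨hk.ne'⟩
  obtain ⟨p, hker, hsurj, hpe⟩ := exists_p hk hkm D hdim hgood
  let Gof : ((Fin k → F) ≃ₗ[F] (Fin k → F)) → Matrix (Fin k) (Fin m) F :=
    fun B => Matrix.of fun r j => (B (p (Pi.single j.succ 1))) r
  have hLL : ∀ B : Stab F k, LL k m (Gof B.1) = B.1.toLinearMap ∘ₗ p := by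
    intro B
    refine (Pi.basisFun F (Fin (m+1))).ext fun i => ?_
    rw [Pi.basisFun_apply]
    refine Fin.cases ?_ ?_ i
    · rw [← ee_eq_single, LL_ee]
      simp only [LinearMap.comp_apply, LinearEquiv.coe_coe]
      rw [hpe, B.2]
    · intro j
      rw [LL_single_succ]
      rfl
  have hmem : ∀ B : Stab F k,
      (Gof B.1).rank = k ∧ LinearMap.ker (LL k m (Gof B.1)) = D := by
    intro B
    have hcomp := hLL B
    have hkerG : LinearMap.ker (LL k m (Gof B.1)) = D := by
      rw [hcomp, ← hker]
      ext x
      simp only [LinearMap.mem_ker, LinearMap.comp_apply, LinearEquiv.coe_coe]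
      rw [map_eq_zero_iff _ B.1.injective]
    refine ⟨?_, hkerG⟩
    apply rank_eq_of_surj
    obtain ⟨x, hx, hx0⟩ := hgood.2
    have hxker : LL k m (Gof B.1) x = 0 := by
      have : x ∈ LinearMap.ker (LL k m (Gof B.1)) := hkerG.symm ▸ hx
      exact this
    rw [LL_apply] at hxker
    have hee : (Gof B.1).mulVec ((-(x 0)⁻¹) • fun j => x j.succ) = ee k := by
      rw [Matrix.mulVec_smul]
      have h1 : (Gof B.1).mulVec (fun j => x j.succ) = -(x 0 • ee k) := by
        rw [eq_neg_iff_add_eq_zero, add_comm]; exact hxker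
      rw [h1, smul_neg, smul_smul, neg_mul, neg_smul, neg_neg,
        inv_mul_cancel₀ hx0, one_smul]
    intro y
    obtain ⟨z, hz⟩ := (B.1.surjective.comp hsurj) y
    have hzy : LL k m (Gof B.1) z = y := by
      rw [hcomp]; exact hz
    rw [LL_apply] at hzy
    refine ⟨z 0 • ((-(x 0)⁻¹) • fun j => x j.succ) + (fun j => z j.succ), ?_⟩
    rw [Matrix.mulVecLin_apply, Matrix.mulVec_add, Matrix.mulVec_smul, hee]
    exact hzy
  let Φ : Stab F k → {G : Matrix (Fin k) (Fin m) F //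
      G.rank = k ∧ LinearMap.ker (LL k m G) = D} := fun B => ⟨Gof B.1, hmem B⟩
  refine (Nat.card_eq_of_bijective Φ ⟨?_, ?_⟩).symm
  · intro B B' hBB'
    have h1 : Gof B.1 = Gof B'.1 := congrArg Subtype.val hBB'
    have h2 : B.1.toLinearMap ∘ₗ p = B'.1.toLinearMap ∘ₗ p := by
      rw [← hLL B, ← hLL B', h1]
    apply Subtype.ext
    apply LinearEquiv.toLinearMap_injective
    apply LinearMap.ext
    intro y
    obtain ⟨x, rfl⟩ := hsurj y
    exact LinearMap.congr_fun h2 x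
  · rintro ⟨G, hG, hkerG⟩
    have hsurjG : Function.Surjective (LL k m G) := LL_surj_of_rank G hG
    obtain ⟨sec, hsec⟩ := (p.exists_rightInverse_of_surjective
      (LinearMap.range_eq_top.mpr hsurj))
    have hsec' : ∀ y, p (sec y) = y := fun y => LinearMap.congr_fun hsec y
    let Bl : (Fin k → F) →ₗ[F] (Fin k → F) := (LL k m G) ∘ₗ sec
    have hBlp : ∀ x, Bl (p x) = LL k m G x := by
      intro x
      have hmem : sec (p x) - x ∈ LinearMap.ker (LL k m G) := by
        rw [hkerG, ← hker, LinearMap.mem_ker, map_sub, hsec' (p x), sub_self]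
      have : LL k m G (sec (p x)) - LL k m G x = 0 := by
        rw [← map_sub]; exact hmem
      have := sub_eq_zero.mp this
      exact this
    have hBl : Function.Bijective Bl := by
      constructor
      · intro a b hab
        obtain ⟨xa, rfl⟩ := hsurj a
        obtain ⟨xb, rfl⟩ := hsurj b
        rw [hBlp, hBlp] at hab
        have : xa - xb ∈ LinearMap.ker (LL k m G) := by
          rw [LinearMap.mem_ker, map_sub, hab, sub_self]
        rw [hkerG, ← hker, LinearMap.mem_ker, map_sub, sub_eq_zero] at this
        exact this
      · intro y
        obtain ⟨x, hx⟩ := hsurjG y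
        exact ⟨p x, by rw [hBlp]; exact hx⟩
    let B : (Fin k → F) ≃ₗ[F] (Fin k → F) := LinearEquiv.ofBijective Bl hBl
    have hBee : B (ee k) = ee k := by
      show Bl (ee k) = ee k
      have : Bl (p (ee (m+1))) = LL k m G (ee (m+1)) := hBlp _
      rw [hpe] at this
      rw [this, LL_ee]
    refine ⟨⟨B, hBee⟩, ?_⟩
    apply Subtype.ext
    show Gof B = G
    funext r j
    show (B (p (Pi.single j.succ 1))) r = G r j
    have : B (p (Pi.single j.succ 1)) = LL k m G (Pi.single j.succ 1) := hBlp _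
    rw [this, LL_single_succ]

end Transfer

section Count

variable {m : ℕ}

lemma count_transfer {k : ℕ} (hk : 0 < k) (hkm : k ≤ m)
    (Q : Submodule F (Fin (m+1) → F) → Prop) :
    (Finset.univ.filter fun G : Matrix (Fin k) (Fin m) F =>
        G.rank = k ∧ Q (LinearMap.ker (LL k m G))).card
      = Nat.card (Stab F k) *
        (Finset.univ.filter fun D : Submodule F (Fin (m+1) → F) =>
            (finrank F D = m + 1 - k ∧ good D) ∧ Q D).card := by
  have hmemb : ∀ G ∈ (Finset.univ.filter fun G : Matrix (Fin k) (Fin m) F =>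
      G.rank = k ∧ Q (LinearMap.ker (LL k m G))),
      LinearMap.ker (LL k m G) ∈ (Finset.univ.filter
        fun D : Submodule F (Fin (m+1) → F) =>
          (finrank F D = m + 1 - k ∧ good D) ∧ Q D) := by
    intro G hG
    simp only [Finset.mem_filter, Finset.mem_univ, true_and] at hG ⊢
    exact ⟨⟨(ker_LL_mem hk G hG.1).1, (ker_LL_mem hk G hG.1).2⟩, hG.2⟩
  rw [Finset.card_eq_sum_card_fiberwise hmemb]
  have hfib : ∀ D ∈ (Finset.univ.filter
      fun D : Submodule F (Fin (m+1) → F) =>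
        (finrank F D = m + 1 - k ∧ good D) ∧ Q D),
      (Finset.filter (fun G => LinearMap.ker (LL k m G) = D)
        (Finset.univ.filter fun G : Matrix (Fin k) (Fin m) F =>
          G.rank = k ∧ Q (LinearMap.ker (LL k m G)))).card = Nat.card (Stab F k) := by
    intro D hD
    simp only [Finset.mem_filter, Finset.mem_univ, true_and] at hD
    have heq : Finset.filter (fun G => LinearMap.ker (LL k m G) = D)
        (Finset.univ.filter fun G : Matrix (Fin k) (Fin m) F =>
          G.rank = k ∧ Q (LinearMap.ker (LL k m G)))
        = Finset.univ.filter (fun G : Matrix (Fin k) (Fin m) F =>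
            G.rank = k ∧ LinearMap.ker (LL k m G) = D) := by
      ext G
      simp only [Finset.mem_filter, Finset.mem_univ, true_and]
      constructor
      · rintro ⟨⟨h1, _⟩, h3⟩; exact ⟨h1, h3⟩
      · rintro ⟨h1, h3⟩; exact ⟨⟨h1, h3 ▸ hD.2⟩, h3⟩
    rw [heq, ← Fintype.card_subtype]
    rw [← Nat.card_eq_fintype_card]
    exact fiber_card hk hkm D hD.1.1 hD.1.2
  rw [Finset.sum_congr rfl hfib, Finset.sum_const, smul_eq_mul, mul_comm]

lemma exists_fullrank {k : ℕ} (hkm : k ≤ m) :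
    ∃ G : Matrix (Fin k) (Fin m) F, G.rank = k := by
  refine ⟨Matrix.of fun r j => if (j : ℕ) = (r : ℕ) then 1 else 0,
    rank_eq_of_surj _ ?_⟩
  intro y
  refine ⟨fun j => if h : (j : ℕ) < k then y ⟨j, h⟩ else 0, ?_⟩
  rw [Matrix.mulVecLin_apply]
  funext r
  unfold Matrix.mulVec dotProduct
  rw [Finset.sum_eq_single (⟨(r : ℕ), lt_of_lt_of_le r.isLt hkm⟩ : Fin m)]
  · simp [r.isLt]
  · intro b _ hb
    have : (b : ℕ) ≠ (r : ℕ) := by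
      intro hc
      exact hb (by ext; simpa using hc)
    simp [this]
  · simp

/-- the permutation of `Fin (m+1)` fixing `0` induced by a permutation of `Fin m` -/
def succPerm (π : Equiv.Perm (Fin m)) : Equiv.Perm (Fin (m+1)) where
  toFun := Fin.cases 0 (fun j => (π j).succ)
  invFun := Fin.cases 0 (fun j => (π.symm j).succ)
  left_inv := by
    intro x
    refine Fin.cases ?_ ?_ x
    · simp
    · intro j; simp
  right_inv := by
    intro x
    refine Fin.cases ?_ ?_ x
    · simp
    · intro j; simp

lemma succPerm_zero (π : Equiv.Perm (Fin m)) : succPerm π 0 = 0 := by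
  simp [succPerm]

lemma succPerm_succ (π : Equiv.Perm (Fin m)) (j : Fin m) :
    succPerm π j.succ = (π j).succ := by
  simp [succPerm]

/-- card of the event-filter depends only on the card of `T` -/
lemma card_Ev_eq {a : ℕ} (T T' : Finset (Fin m)) (hTT' : T.card = T'.card) :
    (Finset.univ.filter fun D : Submodule F (Fin (m+1) → F) =>
        (finrank F D = a ∧ good D) ∧ Ev T D).card
      = (Finset.univ.filter fun D : Submodule F (Fin (m+1) → F) =>
        (finrank F D = a ∧ good D) ∧ Ev T' D).card := by
  set π : Equiv.Perm (Fin m) :=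
    Equiv.extendSubtype (Finset.equivOfCardEq (hTT'.symm)) with hπ
  have hmemπ : ∀ j, j ∈ T' ↔ π j ∈ T := by
    intro j
    constructor
    · intro hj
      exact Equiv.extendSubtype_mem _ _ hj
    · intro hj
      by_contra hc
      exact Equiv.extendSubtype_not_mem _ _ hc hj
  set Pe : (Fin (m+1) → F) ≃ₗ[F] (Fin (m+1) → F) :=
    LinearEquiv.funCongrLeft F F (succPerm π) with hPe
  have hPe_apply : ∀ (x : Fin (m+1) → F) (i : Fin (m+1)),
      Pe.toLinearMap x i = x (succPerm π i) := fun x i => rfl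
  have hEv : ∀ D : Submodule F (Fin (m+1) → F),
      (Ev T' (Submodule.map Pe.toLinearMap D) ↔ Ev T D) := by
    intro D
    constructor
    · rintro ⟨x, hx, hx0, hxT⟩
      rw [Submodule.mem_map] at hx
      obtain ⟨y, hy, rfl⟩ := hx
      refine ⟨y, hy, ?_, ?_⟩
      · rwa [hPe_apply, succPerm_zero] at hx0
      · intro l hl
        have hl' : π.symm l ∈ T' := by
          rw [hmemπ]
          simpa using hl
        have := hxT _ hl'
        rw [hPe_apply, succPerm_succ] at this
        simpa using this
    · rintro ⟨y, hy, hy0, hyT⟩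
      refine ⟨Pe.toLinearMap y, Submodule.mem_map_of_mem hy, ?_, ?_⟩
      · rwa [hPe_apply, succPerm_zero]
      · intro j hj
        rw [hPe_apply, succPerm_succ]
        exact hyT _ ((hmemπ j).mp hj)
  have hPe_ee : Pe.toLinearMap (ee (m+1)) = ee (m+1) := by
    funext i
    rw [hPe_apply]
    refine Fin.cases ?_ ?_ i
    · rw [succPerm_zero]
    · intro j
      rw [succPerm_succ]
      rw [show ((ee (m+1) : Fin (m+1) → F) (π j).succ) = 0 from ee_succ_zero,
        show ((ee (m+1) : Fin (m+1) → F) j.succ) = 0 from ee_succ_zero]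
  have hgoodPe : ∀ D : Submodule F (Fin (m+1) → F),
      good (Submodule.map Pe.toLinearMap D) ↔ good D := by
    intro D
    unfold good
    constructor
    · rintro ⟨h1, x, hx, hx0⟩
      constructor
      · intro hc
        exact h1 (by rw [← hPe_ee]; exact Submodule.mem_map_of_mem hc)
      · rw [Submodule.mem_map] at hx
        obtain ⟨y, hy, rfl⟩ := hx
        exact ⟨y, hy, by rwa [hPe_apply, succPerm_zero] at hx0⟩
    · rintro ⟨h1, x, hx, hx0⟩
      constructor
      · intro hc
        rw [← hPe_ee] at hc
        rw [Submodule.mem_map] at hc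
        obtain ⟨y, hy, hyx⟩ := hc
        have : y = ee (m+1) := Pe.injective hyx
        exact h1 (this ▸ hy)
      · refine ⟨Pe.toLinearMap x, Submodule.mem_map_of_mem hx, ?_⟩
        rw [hPe_apply, succPerm_zero]
        exact hx0
  have hback : ∀ D : Submodule F (Fin (m+1) → F),
      Submodule.map Pe.symm.toLinearMap (Submodule.map Pe.toLinearMap D) = D := by
    intro D
    ext x
    constructor
    · intro hx
      rw [Submodule.mem_map] at hx
      obtain ⟨y, hy, rfl⟩ := hx
      rw [Submodule.mem_map] at hy
      obtain ⟨z, hz, rfl⟩ := hy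
      simpa using hz
    · intro hx
      have : x = Pe.symm.toLinearMap (Pe.toLinearMap x) := by simp
      rw [this]
      exact Submodule.mem_map_of_mem (Submodule.mem_map_of_mem hx)
  have hfwd : ∀ D : Submodule F (Fin (m+1) → F),
      Submodule.map Pe.toLinearMap (Submodule.map Pe.symm.toLinearMap D) = D := by
    intro D
    ext x
    constructor
    · intro hx
      rw [Submodule.mem_map] at hx
      obtain ⟨y, hy, rfl⟩ := hx
      rw [Submodule.mem_map] at hy
      obtain ⟨z, hz, rfl⟩ := hy
      simpa using hz
    · intro hx
      have : x = Pe.toLinearMap (Pe.symm.toLinearMap x) := by simp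
      rw [this]
      exact Submodule.mem_map_of_mem (Submodule.mem_map_of_mem hx)
  refine Finset.card_bij' (fun D _ => Submodule.map Pe.toLinearMap D)
    (fun D _ => Submodule.map Pe.symm.toLinearMap D) ?_ ?_ ?_ ?_
  · intro D hD
    simp only [Finset.mem_filter, Finset.mem_univ, true_and] at hD ⊢
    obtain ⟨⟨hdim, hgd⟩, hev⟩ := hD
    refine ⟨⟨?_, (hgoodPe D).mpr hgd⟩, (hEv D).mpr hev⟩
    rw [LinearEquiv.finrank_map_eq Pe D]
    exact hdim
  · intro D hD
    simp only [Finset.mem_filter, Finset.mem_univ, true_and] at hD ⊢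
    obtain ⟨⟨hdim, hgd⟩, hev⟩ := hD
    refine ⟨⟨?_, ?_⟩, ?_⟩
    · rw [LinearEquiv.finrank_map_eq Pe.symm D]
      exact hdim
    · rw [← hgoodPe _, hfwd D]
      exact hgd
    · rw [← hEv (Submodule.map Pe.symm.toLinearMap D), hfwd D]
      exact hev
  · intro D _
    exact hback D
  · intro D _
    exact hfwd D

/-- duality counting via perp -/
lemma card_perp {a b : ℕ} (hab : a + b = m + 1)
    (P Q : Submodule F (Fin (m+1) → F) → Prop)
    (hPQ : ∀ D : Submodule F (Fin (m+1) → F),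
      finrank F D = a → good D → (P D ↔ Q (perp D))) :
    (Finset.univ.filter fun D : Submodule F (Fin (m+1) → F) =>
        (finrank F D = a ∧ good D) ∧ P D).card
      = (Finset.univ.filter fun D : Submodule F (Fin (m+1) → F) =>
        (finrank F D = b ∧ good D) ∧ Q D).card := by
  refine Finset.card_bij' (fun D _ => perp D) (fun D _ => perp D) ?_ ?_ ?_ ?_
  · intro D hD
    simp only [Finset.mem_filter, Finset.mem_univ, true_and] at hD ⊢
    obtain ⟨⟨hdim, hgd⟩, hp⟩ := hD
    have hfr := finrank_perp D
    refine ⟨⟨by omega, (good_perp_iff D).mpr hgd⟩, (hPQ D hdim hgd).mp hp⟩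
  · intro D hD
    simp only [Finset.mem_filter, Finset.mem_univ, true_and] at hD ⊢
    obtain ⟨⟨hdim, hgd⟩, hq⟩ := hD
    have hfr := finrank_perp D
    have hgd' : good (perp D) := (good_perp_iff D).mpr hgd
    have hdim' : finrank F (perp D) = a := by omega
    refine ⟨⟨hdim', hgd'⟩, ?_⟩
    rw [hPQ (perp D) hdim' hgd', perp_perp]
    exact hq
  · intro D _
    exact perp_perp D
  · intro D _
    exact perp_perp D

lemma mulVec_restrict {k : ℕ} (G : Matrix (Fin k) (Fin m) F) (S : Finset (Fin m))
    (u : Fin m → F) (hu : ∀ j ∉ S, u j = 0) :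
    (G.submatrix id (fun s : {a // a ∈ S} => (s : Fin m))).mulVec (fun s => u s)
      = G.mulVec u := by
  funext r
  unfold Matrix.mulVec dotProduct
  simp only [Matrix.submatrix_apply, id_eq]
  rw [show (Finset.univ : Finset {a // a ∈ S}) = S.attach from rfl]
  rw [Finset.sum_attach S (fun j => G r j * u j)]
  exact Finset.sum_subset (Finset.subset_univ S)
    (fun x _ hx => by rw [hu x hx, mul_zero])

lemma event_iff {k : ℕ} (G : Matrix (Fin k) (Fin m) F) (S : Finset (Fin m)) :
    (∃ v : {a // a ∈ S} → F,
        (G.submatrix id (fun s : {a // a ∈ S} => (s : Fin m))).mulVec v =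
          fun r : Fin k => if (r : ℕ) = 0 then 1 else 0)
      ↔ Ev Sᶜ (LinearMap.ker (LL k m G)) := by
  constructor
  · rintro ⟨v, hv⟩
    set u : Fin m → F := fun j => if h : j ∈ S then v ⟨j, h⟩ else 0 with hu'
    have hu : ∀ j ∉ S, u j = 0 := fun j hj => dif_neg hj
    have hvu : (fun s : {a // a ∈ S} => u s) = v := by
      funext s
      exact dif_pos s.2
    have hGu : G.mulVec u = ee k := by
      rw [← mulVec_restrict G S u hu, hvu, hv]
      rfl
    refine ⟨Fin.cons (-1) u, ?_, ?_, ?_⟩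
    · rw [LinearMap.mem_ker, LL_apply]
      simp only [Fin.cons_zero, Fin.cons_succ]
      rw [hGu, neg_smul, one_smul, neg_add_cancel]
    · simp only [Fin.cons_zero]
      exact neg_ne_zero.mpr one_ne_zero
    · intro j hj
      simp only [Fin.cons_succ]
      exact hu j (Finset.mem_compl.mp hj)
  · rintro ⟨x, hx, hx0, hxT⟩
    rw [LinearMap.mem_ker, LL_apply] at hx
    set u : Fin m → F := (-(x 0)⁻¹) • fun j => x j.succ with hu'
    have hGu : G.mulVec u = ee k := by
      rw [hu', Matrix.mulVec_smul]
      have h1 : G.mulVec (fun j => x j.succ) = -(x 0 • ee k) := by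
        rw [eq_neg_iff_add_eq_zero, add_comm]
        exact hx
      rw [h1, smul_neg, smul_smul, neg_mul, neg_smul, neg_neg,
        inv_mul_cancel₀ hx0, one_smul]
    have hu : ∀ j ∉ S, u j = 0 := by
      intro j hj
      have := hxT j (Finset.mem_compl.mpr hj)
      simp [hu', this]
    refine ⟨fun s => u s, ?_⟩
    rw [mulVec_restrict G S u hu]
    exact hGu

end Count

section Final

variable {m : ℕ}

lemma cardeq {α : Type} [Fintype α] {p q : α → Prop} {ip : DecidablePred p}
    {iq : DecidablePred q} (h : ∀ a, p a ↔ q a) :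
    (@Finset.filter _ p ip Finset.univ).card
      = (@Finset.filter _ q iq Finset.univ).card := by
  refine Finset.card_bij' (fun a _ => a) (fun a _ => a) ?_ ?_
    (fun a _ => rfl) (fun a _ => rfl)
  · intro a ha
    rw [Finset.mem_filter] at ha ⊢
    exact ⟨ha.1, (h a).mp ha.2⟩
  · intro a ha
    rw [Finset.mem_filter] at ha ⊢
    exact ⟨ha.1, (h a).mpr ha.2⟩

lemma erasure_eq {k : ℕ} (hk : 0 < k) (hkm : k ≤ m) (S : Finset (Fin m)) :
    erasureProb F k m S =
      ((Finset.univ.filter fun D : Submodule F (Fin (m+1) → F) =>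
          (finrank F ↥D = m + 1 - k ∧ good D) ∧ ¬ Ev Sᶜ D).card : ℝ) /
      ((Finset.univ.filter fun D : Submodule F (Fin (m+1) → F) =>
          (finrank F ↥D = m + 1 - k ∧ good D) ∧ True).card : ℝ) := by
  unfold erasureProb
  have h1 : (Finset.univ.filter fun G : Matrix (Fin k) (Fin m) F =>
      G.rank = k ∧
        ¬∃ v : {a // a ∈ S} → F,
            (G.submatrix id (fun s : {a // a ∈ S} => (s : Fin m))).mulVec v =
              fun r : Fin k => if (r : ℕ) = 0 then 1 else 0).card
      = Nat.card (Stab F k) *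
        (Finset.univ.filter fun D : Submodule F (Fin (m+1) → F) =>
          (finrank F ↥D = m + 1 - k ∧ good D) ∧ ¬ Ev Sᶜ D).card := by
    have hct := count_transfer (F := F) hk hkm (fun D => ¬ Ev Sᶜ D)
    exact (cardeq fun G =>
        and_congr_right fun _ => not_congr (event_iff G S)).trans
      (hct.trans (congrArg _ (cardeq fun D => Iff.rfl)))
  have h2 : (Finset.univ.filter fun G : Matrix (Fin k) (Fin m) F =>
      G.rank = k).card
      = Nat.card (Stab F k) *
        (Finset.univ.filter fun D : Submodule F (Fin (m+1) → F) =>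
          (finrank F ↥D = m + 1 - k ∧ good D) ∧ True).card := by
    have hct := count_transfer (F := F) hk hkm (fun _ => True)
    exact (cardeq fun G => (and_iff_left trivial).symm).trans
      (hct.trans (congrArg _ (cardeq fun D => Iff.rfl)))
  rw [h1, h2]
  have hc : ((Nat.card (Stab F k) : ℝ)) ≠ 0 := by
    have : 0 < Nat.card (Stab F k) := Nat.card_pos
    exact_mod_cast this.ne'
  push_cast
  rw [mul_div_mul_left _ _ hc]

lemma card_add_card_neg {α : Type} [Fintype α] {b e : α → Prop}
    {i1 : DecidablePred fun a => b a ∧ e a}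
    {i2 : DecidablePred fun a => b a ∧ ¬ e a}
    {i3 : DecidablePred fun a => b a ∧ True} :
    (@Finset.filter _ (fun a => b a ∧ e a) i1 Finset.univ).card
      + (@Finset.filter _ (fun a => b a ∧ ¬ e a) i2 Finset.univ).card
      = (@Finset.filter _ (fun a => b a ∧ True) i3 Finset.univ).card := by
  classical
  rw [show (@Finset.filter _ (fun a => b a ∧ e a) i1 Finset.univ)
      = (Finset.univ.filter b).filter e from by
        ext a; simp [Finset.mem_filter]]
  rw [show (@Finset.filter _ (fun a => b a ∧ ¬ e a) i2 Finset.univ)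
      = (Finset.univ.filter b).filter (fun a => ¬ e a) from by
        ext a; simp [Finset.mem_filter]]
  rw [show (@Finset.filter _ (fun a => b a ∧ True) i3 Finset.univ)
      = Finset.univ.filter b from by
        ext a; simp [Finset.mem_filter]]
  exact Finset.card_filter_add_card_filter_not _

end Final

end StmtAux

theorem stmt_19 (q m i d : ℕ) (hm : 1 ≤ m) (hi : i ≤ m - 1) (hd : d ≤ m)
    (F : Type) [Field F] [Fintype F] (hF : Fintype.card F = q)
    (S S' : Finset (Fin m)) (hS : S.card = d) (hS' : S'.card = m - d) :
    erasureProb F (m - i) m S = 1 - erasureProb F (i + 1) m S' := by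
  have hk1 : 0 < m - i := by omega
  have hkm : m - i ≤ m := by omega
  have hk2 : 0 < i + 1 := by omega
  have hk2m : i + 1 ≤ m := by omega
  rw [StmtAux.erasure_eq hk1 hkm S, StmtAux.erasure_eq hk2 hk2m S']
  have e1 : m + 1 - (m - i) = i + 1 := by omega
  have e2 : m + 1 - (i + 1) = m - i := by omega
  rw [e1, e2]
  have hcards : S.card = (S'ᶜ).card := by
    have : (S'ᶜ).card = m - S'.card := by
      rw [Finset.card_compl, Fintype.card_fin]
    omega
  have hPQ : ∀ D : Submodule F (Fin (m+1) → F),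
      Module.finrank F ↥D = i + 1 → StmtAux.good D →
      ((¬ StmtAux.Ev Sᶜ D) ↔ StmtAux.Ev S (StmtAux.perp D)) := by
    intro D _ _
    rw [StmtAux.ev_dual D Sᶜ, compl_compl, not_not]
  have hA : (Finset.univ.filter fun D : Submodule F (Fin (m+1) → F) =>
        (Module.finrank F ↥D = i + 1 ∧ StmtAux.good D) ∧ ¬ StmtAux.Ev Sᶜ D).card
      = (Finset.univ.filter fun D : Submodule F (Fin (m+1) → F) =>
        (Module.finrank F ↥D = m - i ∧ StmtAux.good D) ∧ StmtAux.Ev S'ᶜ D).card := by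
    have h1 := StmtAux.card_perp (F := F) (m := m) (a := i+1) (b := m-i) (by omega)
      (fun D => ¬ StmtAux.Ev Sᶜ D) (fun D => StmtAux.Ev S D) hPQ
    have h2 := StmtAux.card_Ev_eq (F := F) (a := m - i) S (S'ᶜ) hcards
    exact (StmtAux.cardeq fun D => Iff.rfl).trans
      (h1.trans ((StmtAux.cardeq fun D => Iff.rfl).trans
        (h2.trans (StmtAux.cardeq fun D => Iff.rfl))))
  have hN : (Finset.univ.filter fun D : Submodule F (Fin (m+1) → F) =>
        (Module.finrank F ↥D = i + 1 ∧ StmtAux.good D) ∧ True).card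
      = (Finset.univ.filter fun D : Submodule F (Fin (m+1) → F) =>
        (Module.finrank F ↥D = m - i ∧ StmtAux.good D) ∧ True).card := by
    have h1 := StmtAux.card_perp (F := F) (m := m) (a := i+1) (b := m-i) (by omega)
      (fun _ => True) (fun _ => True) (fun _ _ _ => Iff.rfl)
    exact (StmtAux.cardeq fun D => Iff.rfl).trans
      (h1.trans (StmtAux.cardeq fun D => Iff.rfl))
  rw [hA, hN]
  have hsum : (Finset.univ.filter fun D : Submodule F (Fin (m+1) → F) =>
        (Module.finrank F ↥D = m - i ∧ StmtAux.good D) ∧ StmtAux.Ev S'ᶜ D).card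
      + (Finset.univ.filter fun D : Submodule F (Fin (m+1) → F) =>
        (Module.finrank F ↥D = m - i ∧ StmtAux.good D) ∧ ¬ StmtAux.Ev S'ᶜ D).card
      = (Finset.univ.filter fun D : Submodule F (Fin (m+1) → F) =>
        (Module.finrank F ↥D = m - i ∧ StmtAux.good D) ∧ True).card :=
    StmtAux.card_add_card_neg
  have hN0 : (Finset.univ.filter fun D : Submodule F (Fin (m+1) → F) =>
      (Module.finrank F ↥D = m - i ∧ StmtAux.good D) ∧ True).card ≠ 0 := by
    obtain ⟨G0, hG0⟩ := StmtAux.exists_fullrank (F := F) (k := i + 1) hk2m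
    have hmem := StmtAux.ker_LL_mem hk2 G0 hG0
    apply Finset.card_ne_zero_of_mem
      (a := LinearMap.ker (StmtAux.LL (i+1) m G0))
    simp only [Finset.mem_filter, Finset.mem_univ, true_and]
    exact ⟨⟨by rw [hmem.1]; omega, hmem.2⟩, trivial⟩
  have hNR : ((Finset.univ.filter fun D : Submodule F (Fin (m+1) → F) =>
      (Module.finrank F ↥D = m - i ∧ StmtAux.good D) ∧ True).card : ℝ) ≠ 0 :=
    Nat.cast_ne_zero.mpr hN0
  rw [eq_sub_iff_add_eq, ← add_div, div_eq_one_iff_eq hNR]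
  exact_mod_cast hsum
end
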